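/- Let M = {(x, L) ∈ ℝ² × P(ℝ²) : x ∈ L} be the real blow-up of ℝ² at the origin, equipped with the subspace topology from ℝ² × P(ℝ²), and let ψ : M → ℝ² be the first projection, ψ(x, L) = x. Then for all u, v ∈ ℝ², the preimage ψ⁻¹([u,v]) of the segment [u,v] is connected. -/

import Mathlib

/-- The quotient topology on the real projective line `P(ℝ²)`. -/
noncomputable instance : TopologicalSpace (Projectivization ℝ (ℝ × ℝ)) :=
  inferInstanceAs (TopologicalSpace (Quotient (projectivizationSetoid ℝ (ℝ × ℝ))))

/-- The real blow-up of `ℝ²` at the origin: pairs `(x, L)` with `x ∈ L`,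
topologized as a subspace of `ℝ² × P(ℝ²)`. -/
def BlowUp : Type :=
  { p : (ℝ × ℝ) × Projectivization ℝ (ℝ × ℝ) // p.1 ∈ p.2.submodule }

noncomputable instance : TopologicalSpace BlowUp :=
  inferInstanceAs (TopologicalSpace
    { p : (ℝ × ℝ) × Projectivization ℝ (ℝ × ℝ) // p.1 ∈ p.2.submodule })

/-- The blow-down map `ψ : M → ℝ²`, the first projection. -/
def blowDown (p : BlowUp) : ℝ × ℝ := p.1.1

open Set Projectivization

lemma continuous_mk' : Continuous (Projectivization.mk' ℝ : {v : ℝ × ℝ // v ≠ 0} → Projectivization ℝ (ℝ × ℝ)) :=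
  continuous_quot_mk

lemma mk'_surj : Function.Surjective (Projectivization.mk' ℝ : {v : ℝ × ℝ // v ≠ 0} → Projectivization ℝ (ℝ × ℝ)) :=
  fun L => ⟨⟨L.rep, L.rep_nonzero⟩, by rw [Projectivization.mk'_eq_mk]; exact L.mk_rep⟩

lemma connected_nonzero : IsConnected {v : ℝ × ℝ | v ≠ 0} := by
  have : ({v : ℝ × ℝ | v ≠ 0}) = ({0} : Set (ℝ × ℝ))ᶜ := by ext; simp
  rw [this]
  apply isConnected_compl_singleton_of_one_lt_rank
  rw [rank_prod', Module.rank_self]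
  norm_num

instance : ConnectedSpace {v : ℝ × ℝ // v ≠ 0} := Subtype.connectedSpace connected_nonzero

instance : ConnectedSpace (Projectivization ℝ (ℝ × ℝ)) :=
  mk'_surj.connectedSpace continuous_mk'

noncomputable def sigmaLift (v : {v : ℝ × ℝ // v ≠ 0}) : BlowUp :=
  ⟨(v.1, Projectivization.mk' ℝ v), by
    rw [Projectivization.mk'_eq_mk, Projectivization.submodule_mk]
    exact Submodule.mem_span_singleton_self _⟩

lemma continuous_sigmaLift : Continuous sigmaLift :=
  Continuous.subtype_mk (continuous_subtype_val.prodMk continuous_mk') _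

lemma eq_mk_of_mem {x : ℝ × ℝ} (hx : x ≠ 0) {L : Projectivization ℝ (ℝ × ℝ)}
    (h : x ∈ L.submodule) : L = Projectivization.mk ℝ x hx := by
  rw [Projectivization.submodule_eq, Submodule.mem_span_singleton] at h
  obtain ⟨c, hc⟩ := h
  have hc0 : c ≠ 0 := by rintro rfl; simp at hc; exact hx hc.symm
  rw [← L.mk_rep]
  symm
  rw [Projectivization.mk_eq_mk_iff]
  exact ⟨Units.mk0 c hc0, hc⟩

/-- For the real blow-up `M` of `ℝ²` at the origin and the first
projection `ψ : M → ℝ²`, the preimage of every segment `[u,v]` is connected. -/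
theorem stmt4 :
    ∀ u v : ℝ × ℝ, IsConnected (blowDown ⁻¹' segment ℝ u v) := by
  intro u v
  set S : Set BlowUp := blowDown ⁻¹' segment ℝ u v with hS
  by_cases h0 : (0 : ℝ × ℝ) ∈ segment ℝ u v
  · -- fiber over 0
    set F : Set BlowUp := range (fun L : Projectivization ℝ (ℝ × ℝ) =>
      (⟨(0, L), Submodule.zero_mem _⟩ : BlowUp)) with hF
    have hFconn : IsPreconnected F :=
      (isPreconnected_range ((continuous_const.prodMk continuous_id).subtype_mk _))
    have hFS : F ⊆ S := by
      rintro _ ⟨L, rfl⟩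
      exact h0
    have hbase : (⟨(0, Projectivization.mk ℝ ((1 : ℝ), (0 : ℝ)) (by simp)),
        Submodule.zero_mem _⟩ : BlowUp) ∈ F := ⟨_, rfl⟩
    constructor
    · exact ⟨_, hFS hbase⟩
    apply isPreconnected_of_forall (⟨(0, Projectivization.mk ℝ ((1:ℝ), (0:ℝ)) (by simp)),
        Submodule.zero_mem _⟩ : BlowUp)
    rintro ⟨⟨x, L⟩, hxL⟩ hy
    by_cases hx : x = 0
    · refine ⟨F, hFS, hbase, ?_, hFconn⟩
      subst hx; exact ⟨L, rfl⟩
    · have hL : L = Projectivization.mk ℝ x hx := eq_mk_of_mem hx hxL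
      set lift : ℝ → BlowUp := fun t =>
        ⟨(t • x, Projectivization.mk ℝ x hx), by
          rw [Projectivization.submodule_mk]
          exact Submodule.smul_mem _ t (Submodule.mem_span_singleton_self _)⟩ with hlift
      have hliftc : Continuous lift :=
        Continuous.subtype_mk ((continuous_id.smul continuous_const).prodMk continuous_const) _
      refine ⟨F ∪ lift '' Icc 0 1, ?_, Or.inl hbase, ?_, ?_⟩
      · rintro p (hp | ⟨t, ht, rfl⟩)
        · exact hFS hp
        · show (t • x) ∈ segment ℝ u v
          have := (convex_segment u v) h0 (hy : x ∈ segment ℝ u v)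
            (by linarith [ht.2] : (0:ℝ) ≤ 1 - t) ht.1 (by ring)
          simpa [blowDown] using this
      · right
        refine ⟨1, by norm_num, ?_⟩
        simp only [hlift, one_smul]
        exact Subtype.ext (by simp [hL])
      · apply IsPreconnected.union (lift 0)
        · simp only [hlift, zero_smul]
          exact ⟨_, rfl⟩
        · exact ⟨0, by norm_num, rfl⟩
        · exact hFconn
        · exact (isPreconnected_Icc).image _ hliftc.continuousOn
  · -- 0 not in segment
    have hne : ∀ x ∈ segment ℝ u v, x ≠ 0 := fun x hx h => h0 (h ▸ hx)
    have hu : u ≠ 0 := hne u (left_mem_segment ℝ u v)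
    have key : ∀ (x : ℝ × ℝ) (hx : x ∈ segment ℝ u v),
        IsPreconnected (sigmaLift '' (Subtype.val ⁻¹' segment ℝ u x)) ∧
        sigmaLift '' (Subtype.val ⁻¹' segment ℝ u x) ⊆ S := by
      intro x hx
      constructor
      · apply IsPreconnected.image _ _ continuous_sigmaLift.continuousOn
        have : (Subtype.val : {v : ℝ × ℝ // v ≠ 0} → ℝ × ℝ) '' (Subtype.val ⁻¹' segment ℝ u x) = segment ℝ u x := by
          ext w
          simp only [Set.mem_image, Set.mem_preimage, Subtype.exists, exists_and_right,
            exists_eq_right]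
          exact ⟨fun ⟨_, h⟩ => h, fun hw =>
            ⟨hne w ((convex_segment u v).segment_subset (left_mem_segment ℝ u v) hx hw), hw⟩⟩
        have h2 : IsPreconnected ((Subtype.val : {v : ℝ × ℝ // v ≠ 0} → ℝ × ℝ) ''
            (Subtype.val ⁻¹' segment ℝ u x)) := by
          rw [this]; exact (convex_segment u x).isPreconnected
        exact Topology.IsInducing.subtypeVal.isPreconnected_image.mp h2
      · rintro _ ⟨⟨w, hw0⟩, hw, rfl⟩
        exact (convex_segment u v).segment_subset (left_mem_segment ℝ u v) hx hw
    constructor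
    · exact ⟨sigmaLift ⟨u, hu⟩, left_mem_segment ℝ u v⟩
    apply isPreconnected_of_forall (sigmaLift ⟨u, hu⟩)
    rintro ⟨⟨x, L⟩, hxL⟩ hy
    have hx : x ≠ 0 := hne x hy
    have hL : L = Projectivization.mk ℝ x hx := eq_mk_of_mem hx hxL
    refine ⟨sigmaLift '' (Subtype.val ⁻¹' segment ℝ u x), (key x hy).2, ?_, ?_, (key x hy).1⟩
    · exact ⟨⟨u, hu⟩, left_mem_segment ℝ u x, rfl⟩
    · refine ⟨⟨x, hx⟩, right_mem_segment ℝ u x, ?_⟩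
      exact Subtype.ext (by simp [sigmaLift, Projectivization.mk'_eq_mk, hL])
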